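/- Let a, c ∈ ℝᶜ and suppose index y is NOT a maximal coordinate of a, i.e., there exists j with a_j > a_y. Then the softmax confidence on class y of z(s) = s·a + c tends to 0 as s → ∞: exp(z(s)_y)/∑_j exp(z(s)_j) → 0. -/
import Mathlib


noncomputable def softmax {C : ℕ} (z : Fin C → ℝ) (i : Fin C) : ℝ :=
  Real.exp (z i) / ∑ j, Real.exp (z j)

/-- If y is not a maximal coordinate of a, then the softmax confidence on y of
z(s) = s·a + c tends to 0 as s → ∞. -/
theorem confidence_tendsto_zero {C : ℕ} (a c : Fin C → ℝ) (y : Fin C)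
    (hnotmax : ∃ j, a y < a j) :
    Filter.Tendsto (fun s : ℝ => softmax (fun i => s * a i + c i) y)
      Filter.atTop (nhds 0) := by
  obtain ⟨j, hj⟩ := hnotmax
  have hpos : ∀ s : ℝ, (0:ℝ) < ∑ i, Real.exp (s * a i + c i) :=
    fun s => Finset.sum_pos (fun i _ => Real.exp_pos _) ⟨y, Finset.mem_univ y⟩
  have hub : ∀ s : ℝ, softmax (fun i => s * a i + c i) y ≤
      Real.exp ((a y - a j) * s + (c y - c j)) := by
    intro s
    have hden : Real.exp (s * a j + c j) ≤ ∑ i, Real.exp (s * a i + c i) :=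
      Finset.single_le_sum (f := fun i => Real.exp (s * a i + c i)) (fun i _ => (Real.exp_pos _).le) (Finset.mem_univ j)
    have : softmax (fun i => s * a i + c i) y ≤
        Real.exp (s * a y + c y) / Real.exp (s * a j + c j) := by
      apply div_le_div_of_nonneg_left (Real.exp_pos _).le (Real.exp_pos _) hden
    calc softmax (fun i => s * a i + c i) y
        ≤ Real.exp (s * a y + c y) / Real.exp (s * a j + c j) := this
      _ = Real.exp ((a y - a j) * s + (c y - c j)) := by
          rw [← Real.exp_sub]; ring_nf
  have hlim : Filter.Tendsto (fun s : ℝ => Real.exp ((a y - a j) * s + (c y - c j)))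
      Filter.atTop (nhds 0) := by
    apply Real.tendsto_exp_atBot.comp
    apply Filter.tendsto_atBot_add_const_right
    exact Filter.Tendsto.const_mul_atTop_of_neg (by linarith) Filter.tendsto_id
  refine squeeze_zero (fun s => ?_) hub hlim
  exact div_nonneg (Real.exp_pos _).le (hpos s).le
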